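/- Let M = A ⊕ C be a block-diagonal positive definite Hermitian matrix (A of size d_P×d_P, C of size d_Q×d_Q) and let Y = [[0, B],[B*, 0]] be the off-diagonal Hermitian matrix built from a d_P×d_Q complex matrix B. Then H_M(Y,Y) = 2 · Tr[B* Ω_{A,C}⁻¹(B)]. -/

import Mathlib

open Matrix MeasureTheory
open scoped ComplexOrder

noncomputable section

/-- BKM quadratic form `H_N(Y,Y) = ∫₀^∞ Tr[Y (N+rI)⁻¹ Y (N+rI)⁻¹] dr`. -/
def bkmH {m : Type*} [Fintype m] [DecidableEq m] (N Y : Matrix m m ℂ) : ℝ :=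
  ∫ r in Set.Ioi (0 : ℝ),
    ((Y * (N + r • 1)⁻¹ * Y * (N + r • 1)⁻¹).trace).re

lemma aux_smul_one {n : ℕ} (r : ℝ) :
    (r • (1 : Matrix (Fin n) (Fin n) ℂ)) = diagonal (fun _ => (r : ℂ)) := by
  ext i j; by_cases h : i = j <;> simp [h, Matrix.one_apply, diagonal]

lemma aux_pd {n : ℕ} {A : Matrix (Fin n) (Fin n) ℂ} (hA : A.PosDef) {r : ℝ} (hr : 0 ≤ r) :
    (A + r • 1).PosDef := by
  refine hA.add_posSemidef ?_
  rw [aux_smul_one, posSemidef_diagonal_iff]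
  intro i; simpa using hr

-- stated in the plain (Pi-topology) world, scalar-valued conclusion
lemma entry_cont {n : ℕ} {A : Matrix (Fin n) (Fin n) ℂ} (hA : A.PosDef) (i j : Fin n) :
    ContinuousOn (fun r : ℝ => (A + r • 1)⁻¹ i j) (Set.Ici 0) := by
  have hdet : ∀ r ∈ Set.Ici (0:ℝ), (A + r • (1 : Matrix (Fin n) (Fin n) ℂ)).det ≠ 0 :=
    fun r hr => (aux_pd hA hr).det_pos.ne'
  have hcont : Continuous (fun r : ℝ => A + r • (1 : Matrix (Fin n) (Fin n) ℂ)) := by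
    continuity
  have h1 : ContinuousOn (fun r : ℝ => ((A + r • (1 : Matrix (Fin n) (Fin n) ℂ)).det)⁻¹)
      (Set.Ici 0) := ((hcont.matrix_det).continuousOn).inv₀ hdet
  have h2 : Continuous (fun r : ℝ => (A + r • (1 : Matrix (Fin n) (Fin n) ℂ)).adjugate i j) := by
    exact (continuous_apply j).comp ((continuous_apply i).comp hcont.matrix_adjugate)
  have heq : ∀ r : ℝ, (A + r • (1 : Matrix (Fin n) (Fin n) ℂ))⁻¹ i j
      = ((A + r • (1 : Matrix (Fin n) (Fin n) ℂ)).det)⁻¹ * (A + r • 1).adjugate i j := by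
    intro r
    rw [Matrix.inv_def, Ring.inverse_eq_inv']
    simp [Matrix.smul_apply, smul_eq_mul]
  simp_rw [heq]
  exact h1.mul h2.continuousOn

lemma star_dot_self (n : ℕ) (w : Fin n → ℂ) :
    star w ⬝ᵥ w = ((∑ k, ‖w k‖ ^ 2 : ℝ) : ℂ) := by
  simp only [dotProduct, Pi.star_apply, Complex.star_def]
  push_cast
  exact Finset.sum_congr rfl fun k _ => RCLike.conj_mul (w k)

lemma inv_entry_bound {n : ℕ} {A : Matrix (Fin n) (Fin n) ℂ} (hA : A.PosDef)
    {r : ℝ} (hr : 0 < r) (i j : Fin n) : ‖(A + r • 1)⁻¹ i j‖ ≤ 1 / r := by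
  set X := A + r • (1 : Matrix (Fin n) (Fin n) ℂ) with hXdef
  have hX : X.PosDef := by
    refine hA.add_posSemidef ?_
    have : (r • (1 : Matrix (Fin n) (Fin n) ℂ)) = diagonal (fun _ => (r : ℂ)) := by
      ext i j; by_cases h : i = j <;> simp [h, Matrix.one_apply, diagonal]
    rw [this, posSemidef_diagonal_iff]
    intro i; simpa using hr.le
  set w : Fin n → ℂ := X⁻¹ *ᵥ Pi.single j 1 with hw
  have hXw : X *ᵥ w = Pi.single j 1 := by
    rw [hw, mulVec_mulVec, Matrix.mul_nonsing_inv _ ((Matrix.isUnit_iff_isUnit_det X).mp hX.isUnit),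
      one_mulVec]
  set S : ℝ := ∑ k, ‖w k‖ ^ 2 with hS
  have hSnn : 0 ≤ S := Finset.sum_nonneg fun k _ => sq_nonneg _
  have hdot : (star w ⬝ᵥ (X *ᵥ w)).re = (star w ⬝ᵥ (A *ᵥ w)).re + r * S := by
    rw [hXdef, add_mulVec, dotProduct_add]
    have h1 : (r • (1 : Matrix (Fin n) (Fin n) ℂ)) *ᵥ w = r • w := by
      rw [smul_mulVec, one_mulVec]
    have h2 : star w ⬝ᵥ (r • w) = (r : ℂ) * (star w ⬝ᵥ w) := by
      simp [dotProduct_smul, Complex.real_smul]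
    rw [h1, Complex.add_re, h2, star_dot_self]
    norm_num
    refine Or.inl ?_
    rw [hS]
    refine Finset.sum_congr rfl fun k _ => ?_
    rw [← Complex.ofReal_pow, Complex.ofReal_re]
  have hA0 : 0 ≤ (star w ⬝ᵥ (A *ᵥ w)).re := (Complex.le_def.mp (hA.posSemidef.dotProduct_mulVec_nonneg w)).1
  have key : r * S ≤ Real.sqrt S := by
    have h1 : r * S ≤ (star w ⬝ᵥ (X *ᵥ w)).re := by rw [hdot]; linarith
    have h2 : (star w ⬝ᵥ (X *ᵥ w)).re ≤ Real.sqrt S := by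
      rw [hXw, dotProduct_single, mul_one]
      have h3 : (star w j).re ≤ ‖w j‖ := by
        calc (star w j).re ≤ ‖star w j‖ := Complex.re_le_norm _
        _ = ‖w j‖ := by simp
      refine h3.trans ?_
      rw [← Real.sqrt_sq (norm_nonneg (w j))]
      exact Real.sqrt_le_sqrt
        (Finset.single_le_sum (f := fun k => ‖w k‖^2) (fun k _ => sq_nonneg _) (Finset.mem_univ j))
    linarith
  have hsqrt : Real.sqrt S ≤ 1 / r := by
    rcases eq_or_lt_of_le hSnn with h | h
    · rw [← h]; simp; positivity
    · have hs : 0 < Real.sqrt S := Real.sqrt_pos.mpr h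
      have hSeq : S = Real.sqrt S * Real.sqrt S := (Real.mul_self_sqrt hSnn).symm
      have h4 : r * Real.sqrt S ≤ 1 := by nlinarith
      rw [le_div_iff₀ hr]
      linarith
  have hwi : (A + r • 1)⁻¹ i j = w i := by
    rw [hw, mulVec_single]
    simp
    rfl
  rw [hwi]
  calc ‖w i‖ ≤ Real.sqrt S := by
        rw [← Real.sqrt_sq (norm_nonneg (w i))]
        exact Real.sqrt_le_sqrt
          (Finset.single_le_sum (f := fun k => ‖w k‖^2) (fun k _ => sq_nonneg _) (Finset.mem_univ i))
  _ ≤ 1 / r := hsqrt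

lemma entry_integrable {dP dQ : ℕ}
    (A : Matrix (Fin dP) (Fin dP) ℂ) (C : Matrix (Fin dQ) (Fin dQ) ℂ)
    (B : Matrix (Fin dP) (Fin dQ) ℂ) (hA : A.PosDef) (hC : C.PosDef)
    (i : Fin dP) (j : Fin dQ) :
    IntegrableOn (fun r : ℝ => ((A + r • 1)⁻¹ * B * (C + r • 1)⁻¹) i j) (Set.Ioi 0) := by
  have hg : ∀ r : ℝ, ((A + r • 1)⁻¹ * B * (C + r • 1)⁻¹) i j
      = ∑ l, (∑ k, (A + r • 1)⁻¹ i k * B k l) * (C + r • 1)⁻¹ l j := by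
    intro r
    rw [Matrix.mul_apply]
    exact Finset.sum_congr rfl fun l _ => by rw [Matrix.mul_apply]
  have contg : ContinuousOn (fun r : ℝ => ((A + r • 1)⁻¹ * B * (C + r • 1)⁻¹) i j)
      (Set.Ici 0) := by
    simp_rw [hg]
    refine continuousOn_finset_sum _ fun l _ => ContinuousOn.mul ?_ (entry_cont hC l j)
    exact continuousOn_finset_sum _ fun k _ => (entry_cont hA i k).mul continuousOn_const
  rw [← Set.Ioc_union_Ioi_eq_Ioi (zero_le_one : (0:ℝ) ≤ 1)]
  refine IntegrableOn.union ?_ ?_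
  · exact ((contg.mono Set.Icc_subset_Ici_self).integrableOn_Icc).mono_set
      Set.Ioc_subset_Icc_self
  · set c : ℝ := ∑ k, ∑ l, ‖B k l‖ with hc
    have hcnn : 0 ≤ c := Finset.sum_nonneg fun _ _ => Finset.sum_nonneg fun _ _ => norm_nonneg _
    refine Integrable.mono'
      ((integrableOn_Ioi_rpow_of_lt (by norm_num : (-2:ℝ) < -1) one_pos).const_mul c)
      ((contg.mono (Set.Ioi_subset_Ici (by norm_num))).aestronglyMeasurable measurableSet_Ioi) ?_
    filter_upwards [ae_restrict_mem measurableSet_Ioi] with r hr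
    have hr1 : (1:ℝ) < r := hr
    have hr0 : (0:ℝ) < r := lt_trans one_pos hr1
    have hpow : r ^ (-2:ℝ) = 1/r * (1/r) := by
      rw [Real.rpow_neg hr0.le, show (2:ℝ) = ((2:ℕ):ℝ) by norm_num, Real.rpow_natCast, pow_two,
        mul_inv]
      norm_num
    rw [hg, hpow]
    calc ‖∑ l, (∑ k, (A + r • 1)⁻¹ i k * B k l) * (C + r • 1)⁻¹ l j‖
        ≤ ∑ l, ‖(∑ k, (A + r • 1)⁻¹ i k * B k l) * (C + r • 1)⁻¹ l j‖ := norm_sum_le _ _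
      _ ≤ ∑ l, (∑ k, ‖B k l‖ * (1/r)) * (1/r) := by
          refine Finset.sum_le_sum fun l _ => ?_
          rw [norm_mul]
          refine mul_le_mul ?_ (inv_entry_bound hC hr0 l j) (norm_nonneg _) ?_
          · refine (norm_sum_le _ _).trans ?_
            refine Finset.sum_le_sum fun k _ => ?_
            rw [norm_mul, mul_comm ‖(A + r • 1)⁻¹ i k‖]
            exact mul_le_mul_of_nonneg_left (inv_entry_bound hA hr0 i k) (norm_nonneg _)
          · positivity
      _ = c * (1/r * (1/r)) := by
          rw [hc, Finset.sum_comm, Finset.sum_mul]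
          refine Finset.sum_congr rfl fun l _ => ?_
          rw [← Finset.sum_mul, mul_assoc]

lemma trace_fromBlocks' {l m R : Type*} [Fintype l] [Fintype m] [AddCommMonoid R]
    (A : Matrix l l R) (B : Matrix l m R) (C : Matrix m l R) (D : Matrix m m R) :
    (fromBlocks A B C D).trace = A.trace + D.trace := by
  simp [Matrix.trace, Matrix.diag, Fintype.sum_sum_type, fromBlocks]

lemma integrand_eq {dP dQ : ℕ}
    (A : Matrix (Fin dP) (Fin dP) ℂ) (C : Matrix (Fin dQ) (Fin dQ) ℂ)
    (B : Matrix (Fin dP) (Fin dQ) ℂ) (hA : A.PosDef) (hC : C.PosDef)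
    {r : ℝ} (hr : 0 < r) :
    ((fromBlocks 0 B Bᴴ 0 * (fromBlocks A 0 0 C + r • 1)⁻¹ * fromBlocks 0 B Bᴴ 0 *
        (fromBlocks A 0 0 C + r • 1)⁻¹).trace).re
      = 2 * ((Bᴴ * ((A + r • 1)⁻¹ * B * (C + r • 1)⁻¹)).trace).re := by
  have hApd := aux_pd hA hr.le
  have hCpd := aux_pd hC hr.le
  set P := (A + r • (1 : Matrix (Fin dP) (Fin dP) ℂ))⁻¹ with hP
  set Q := (C + r • (1 : Matrix (Fin dQ) (Fin dQ) ℂ))⁻¹ with hQ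
  have hsum : (fromBlocks A 0 0 C + r • 1 :
      Matrix (Fin dP ⊕ Fin dQ) (Fin dP ⊕ Fin dQ) ℂ)
      = fromBlocks (A + r • 1) 0 0 (C + r • 1) := by
    rw [← fromBlocks_one, fromBlocks_smul, fromBlocks_add]
    simp
  have hinv : (fromBlocks A 0 0 C + r • 1 :
      Matrix (Fin dP ⊕ Fin dQ) (Fin dP ⊕ Fin dQ) ℂ)⁻¹ = fromBlocks P 0 0 Q := by
    rw [hsum]
    apply Matrix.inv_eq_right_inv
    rw [fromBlocks_multiply]
    simp only [Matrix.mul_zero, Matrix.zero_mul, add_zero, zero_add,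
      Matrix.mul_nonsing_inv _ ((Matrix.isUnit_iff_isUnit_det _).mp hApd.isUnit),
      Matrix.mul_nonsing_inv _ ((Matrix.isUnit_iff_isUnit_det _).mp hCpd.isUnit), ← hP, ← hQ]
    rw [hP, hQ, Matrix.mul_nonsing_inv _ ((Matrix.isUnit_iff_isUnit_det _).mp hApd.isUnit),
      Matrix.mul_nonsing_inv _ ((Matrix.isUnit_iff_isUnit_det _).mp hCpd.isUnit)]
    exact fromBlocks_one
  rw [hinv]
  have hmul : (fromBlocks 0 B Bᴴ 0 * fromBlocks P 0 0 Q * fromBlocks 0 B Bᴴ 0 *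
      fromBlocks P 0 0 Q : Matrix (Fin dP ⊕ Fin dQ) (Fin dP ⊕ Fin dQ) ℂ)
      = fromBlocks (B * Q * Bᴴ * P) 0 0 (Bᴴ * P * B * Q) := by
    rw [fromBlocks_multiply, fromBlocks_multiply, fromBlocks_multiply]
    simp [Matrix.mul_assoc]
  rw [hmul, trace_fromBlocks']
  have t1 : (B * Q * Bᴴ * P).trace = (Bᴴ * ((A + r • 1)⁻¹ * B * (C + r • 1)⁻¹)).trace := by
    rw [Matrix.trace_mul_comm, ← hP, ← hQ]
    rw [show P * (B * Q * Bᴴ) = (P * B * Q) * Bᴴ by simp [Matrix.mul_assoc]]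
    rw [Matrix.trace_mul_comm, ← Matrix.mul_assoc]
  have t2 : (Bᴴ * P * B * Q).trace = (Bᴴ * ((A + r • 1)⁻¹ * B * (C + r • 1)⁻¹)).trace := by
    rw [← hP, ← hQ]
    simp [Matrix.mul_assoc]
  rw [t1, t2, Complex.add_re]
  ring

attribute [local instance] Matrix.frobeniusNormedAddCommGroup Matrix.frobeniusNormedSpace

/-- BKM kernel `Ω_{A,C}⁻¹(B) = ∫₀^∞ (A+rI)⁻¹ B (C+rI)⁻¹ dr` (Bochner integral). -/
def Omega {dP dQ : ℕ} (A : Matrix (Fin dP) (Fin dP) ℂ) (C : Matrix (Fin dQ) (Fin dQ) ℂ)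
    (B : Matrix (Fin dP) (Fin dQ) ℂ) : Matrix (Fin dP) (Fin dQ) ℂ :=
  ∫ r in Set.Ioi (0 : ℝ), (A + r • 1)⁻¹ * B * (C + r • 1)⁻¹

lemma F_integrable {dP dQ : ℕ}
    (A : Matrix (Fin dP) (Fin dP) ℂ) (C : Matrix (Fin dQ) (Fin dQ) ℂ)
    (B : Matrix (Fin dP) (Fin dQ) ℂ) (hA : A.PosDef) (hC : C.PosDef) :
    @IntegrableOn ℝ (Matrix (Fin dP) (Fin dQ) ℂ) _ _ SeminormedAddGroup.toContinuousENorm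
      (fun r : ℝ => (A + r • 1)⁻¹ * B * (C + r • 1)⁻¹) (Set.Ioi 0) volume := by
  have hrepr : (fun r : ℝ => (A + r • 1)⁻¹ * B * (C + r • 1)⁻¹)
      = fun r : ℝ => ∑ i, ∑ j, ((A + r • 1)⁻¹ * B * (C + r • 1)⁻¹) i j •
          Matrix.single i j (1:ℂ) := by
    funext r
    conv_lhs => rw [matrix_eq_sum_single ((A + r • 1)⁻¹ * B * (C + r • 1)⁻¹)]
    refine Finset.sum_congr rfl fun i _ => Finset.sum_congr rfl fun j _ => ?_
    rw [smul_single, smul_eq_mul, mul_one]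
  rw [hrepr]
  exact integrable_finset_sum _ fun i _ => integrable_finset_sum _ fun j _ =>
    (entry_integrable A C B hA hC i j).smul_const _


/-- For block-diagonal positive definite `M = A ⊕ C` and off-diagonal
`Y = [[0,B],[B*,0]]`, the BKM form evaluates as `H_M(Y,Y) = 2 Tr[B* Ω_{A,C}⁻¹(B)]`. -/
theorem bkmH_block_eval {dP dQ : ℕ} (hdP : 1 ≤ dP) (hdQ : 1 ≤ dQ)
    (A : Matrix (Fin dP) (Fin dP) ℂ) (C : Matrix (Fin dQ) (Fin dQ) ℂ)
    (B : Matrix (Fin dP) (Fin dQ) ℂ)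
    (hA : A.PosDef) (hC : C.PosDef)
    (M : Matrix (Fin dP ⊕ Fin dQ) (Fin dP ⊕ Fin dQ) ℂ)
    (Y : Matrix (Fin dP ⊕ Fin dQ) (Fin dP ⊕ Fin dQ) ℂ)
    (hM : M = fromBlocks A 0 0 C) (hY : Y = fromBlocks 0 B Bᴴ 0) :
    bkmH M Y = 2 * ((Bᴴ * Omega A C B).trace).re := by
  subst hM hY
  set F := fun r : ℝ => (A + r • 1)⁻¹ * B * (C + r • 1)⁻¹ with hF
  have hInt : @IntegrableOn ℝ (Matrix (Fin dP) (Fin dQ) ℂ) _ _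
      SeminormedAddGroup.toContinuousENorm F (Set.Ioi 0) volume := F_integrable A C B hA hC
  let ψ : Matrix (Fin dP) (Fin dQ) ℂ →ₗ[ℝ] ℝ :=
    { toFun := fun X => ((Bᴴ * X).trace).re
      map_add' := fun X Z => by simp [Matrix.mul_add]
      map_smul' := fun r X => by
        simp [Matrix.mul_smul, Complex.real_smul] }
  let φ := LinearMap.toContinuousLinearMap ψ
  have hφ : ∀ X, φ X = ((Bᴴ * X).trace).re := fun X => rfl
  have h1 : bkmH (fromBlocks A 0 0 C) (fromBlocks 0 B Bᴴ 0)
      = ∫ r in Set.Ioi (0:ℝ), 2 * φ (F r) := by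
    unfold bkmH
    refine setIntegral_congr_fun measurableSet_Ioi fun r hr => ?_
    rw [hφ]
    exact integrand_eq A C B hA hC hr
  rw [h1, integral_const_mul]
  congr 1
  rw [show ∫ a in Set.Ioi (0:ℝ), φ (F a) = φ (∫ a in Set.Ioi (0:ℝ), F a) from
    ContinuousLinearMap.integral_comp_comm φ hInt, hφ]
  rfl
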